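/- For system (A), the straight line (c + f)·x + 2·y = 0 is an invariant algebraic curve if and only if e = −(2 + c)·(c + f)/2; moreover, when e = −(2 + c)·(c + f)/2 the polynomial identity p·∂f₃/∂x + q·∂f₃/∂y = K₃·f₃ holds with f₃(x,y) = (c + f)·x + 2·y and cofactor K₃(x,y) = 2·(x − 1). -/

import Mathlib

open MvPolynomial

/-- Right-hand side p of system (A). -/
noncomputable def pA (c : ℝ) : MvPolynomial (Fin 2) ℝ :=
  C c * X 0 + X 1 - C c * X 0 ^ 2

/-- Right-hand side q of system (A). -/
noncomputable def qA (c e f : ℝ) : MvPolynomial (Fin 2) ℝ :=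
  C e * X 0 + C (-1 + (e + f) / c) * X 1 - C e * X 0 ^ 2 + C 2 * X 0 * X 1

/-- The line `(c + f)x + 2y = 0`. -/
noncomputable def f3A (c f : ℝ) : MvPolynomial (Fin 2) ℝ :=
  C (c + f) * X 0 + C 2 * X 1

lemma pd0_f3A (c f : ℝ) : pderiv 0 (f3A c f) = C (c + f) := by simp [f3A]

lemma pd1_f3A (c f : ℝ) : pderiv 1 (f3A c f) = C 2 := by simp [f3A]

/-- For system (A), the straight line `(c + f)x + 2y = 0` is an invariant algebraic
curve if and only if `e = -(2 + c)(c + f)/2`; moreover in that case the identity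
holds with cofactor `K₃ = 2(x - 1)`. -/
theorem invariant_line_f3_sysA (c e f : ℝ) (hc : c ≠ 0) :
    ((∃ K : MvPolynomial (Fin 2) ℝ,
        pA c * pderiv 0 (f3A c f) + qA c e f * pderiv 1 (f3A c f)
          = K * f3A c f) ↔ e = -(2 + c) * (c + f) / 2) ∧
    (e = -(2 + c) * (c + f) / 2 →
      pA c * pderiv 0 (f3A c f) + qA c e f * pderiv 1 (f3A c f)
        = (C 2 * (X 0 - 1)) * f3A c f) := by
  have hid : e = -(2 + c) * (c + f) / 2 →
      pA c * pderiv 0 (f3A c f) + qA c e f * pderiv 1 (f3A c f)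
        = (C 2 * (X 0 - 1)) * f3A c f := by
    intro he
    subst he
    rw [pd0_f3A, pd1_f3A]
    apply MvPolynomial.funext
    intro v
    simp [pA, qA, f3A]
    field_simp
    ring
  refine ⟨⟨?_, fun he => ⟨C 2 * (X 0 - 1), hid he⟩⟩, hid⟩
  rintro ⟨K, hK⟩
  rw [pd0_f3A, pd1_f3A] at hK
  have h1 := congrArg (eval ![1, -(c+f)/2]) hK
  have h2 := congrArg (eval ![2, -(c+f)]) hK
  simp [pA, qA, f3A] at h1 h2
  field_simp at h1 h2
  have key : c * (c*(c+f) + 2*e + 2*(c+f)) = 0 := by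
    linear_combination (h1 - h2)/2
  have h0 : c*(c+f) + 2*e + 2*(c+f) = 0 := by
    rcases mul_eq_zero.mp key with h | h
    · exact absurd h hc
    · exact h
  linarith [h0]
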